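/- For n ≥ 3, the line graph L(K_n) is (2n−4)-regular and super-λ, and therefore X(L(K_n)) ≅ L(K_n). -/

import Mathlib

open SimpleGraph

variable {V : Type*}

/-- `X` is an edge-cut of `G`: a set of edges of `G` whose deletion disconnects `G`. -/
def IsEdgeCut (G : SimpleGraph V) (X : Set (Sym2 V)) : Prop :=
  X ⊆ G.edgeSet ∧ ¬ (G.deleteEdges X).Connected

/-- `X` is a minimum edge-cut (mincut) of `G`. -/
def IsMinCut (G : SimpleGraph V) (X : Set (Sym2 V)) : Prop :=
  IsEdgeCut G X ∧ ∀ Y : Set (Sym2 V), IsEdgeCut G Y → X.ncard ≤ Y.ncard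

/-- The edge connectivity of `G`: minimum cardinality of an edge-cut. -/
noncomputable def edgeConn (G : SimpleGraph V) : ℕ :=
  sInf {n | ∃ X : Set (Sym2 V), IsEdgeCut G X ∧ X.ncard = n}

/-- The mincut graph `X(G)`: intersection graph of the minimum edge-cuts of `G`. -/
def mincutGraph (G : SimpleGraph V) : SimpleGraph {X : Set (Sym2 V) // IsMinCut G X} :=
  SimpleGraph.fromRel (fun A B => (A.1 ∩ B.1).Nonempty)

/-- `G` is super-λ: maximally edge-connected and every minimum edge-cut is the set of
edges incident to some minimum-degree vertex. -/
def IsSuperLambda {V : Type*} [Fintype V] (G : SimpleGraph V) [DecidableRel G.Adj] : Prop :=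
  edgeConn G = G.minDegree ∧
    ∀ X : Set (Sym2 V), IsMinCut G X →
      ∃ v : V, G.degree v = G.minDegree ∧ X = G.incidenceSet v

open Finset
open scoped Classical

namespace LKn

variable {n : ℕ}

abbrev K (n : ℕ) : SimpleGraph (Fin n) := ⊤

noncomputable abbrev Ev (n : ℕ) (u : Fin n) : Finset (K n).edgeSet :=
  Finset.univ.filter (fun f => u ∈ (f : Sym2 (Fin n)))

lemma card_Ev (u : Fin n) : (Ev n u).card = n - 1 := by
  classical
  rw [show n - 1 = (Finset.univ.erase u).card by simp [Finset.card_erase_of_mem]]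
  refine (Finset.card_bij (fun w hw => (⟨s(u,w), by
      simp [Ne.symm (Finset.mem_erase.1 hw).1]⟩ : (K n).edgeSet)) ?_ ?_ ?_).symm
  · intro w hw; simp [Ev]
  · intro w hw w' hw' h
    have h1 := (Finset.mem_erase.1 hw).1
    simp only [Subtype.ext_iff, Sym2.eq_iff, Prod.swap_prod_mk, Prod.mk.injEq] at h
    rcases h with h | h
    · exact h.2
    · exact absurd h.2 h1
  · intro f hf
    simp only [Ev, Finset.mem_filter, Finset.mem_univ, true_and] at hf
    have hne : Sym2.Mem.other hf ≠ u := Sym2.other_ne (by simpa using f.2) hf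
    exact ⟨Sym2.Mem.other hf, Finset.mem_erase.2 ⟨hne, Finset.mem_univ _⟩, Subtype.ext (Sym2.other_spec hf)⟩

/-- An edge containing both endpoints u ≠ v must be s(u,v). -/
lemma eq_of_mem_mem {u v : Fin n} (huv : u ≠ v) (f : (K n).edgeSet)
    (hu : u ∈ (f : Sym2 (Fin n))) (hv : v ∈ (f : Sym2 (Fin n))) :
    (f : Sym2 (Fin n)) = s(u,v) := by
  obtain ⟨x, hx⟩ := f
  induction x with
  | _ a b =>
    simp only [Sym2.mem_iff] at hu hv
    rcases hu with rfl | rfl <;> rcases hv with rfl | rfl <;>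
      first | exact absurd rfl huv | simp [Sym2.eq_swap]




lemma exists_rep (e : (K n).edgeSet) : ∃ u v : Fin n, u ≠ v ∧ (e : Sym2 (Fin n)) = s(u,v) := by
  obtain ⟨x, hx⟩ := e
  induction x with
  | _ a b => exact ⟨a, b, by simpa using hx, rfl⟩

lemma Ev_inter {u v : Fin n} (huv : u ≠ v) (e : (K n).edgeSet)
    (he : (e : Sym2 (Fin n)) = s(u,v)) : Ev n u ∩ Ev n v = {e} := by
  ext f
  simp only [Finset.mem_inter, Ev, Finset.mem_filter, Finset.mem_univ, true_and,
    Finset.mem_singleton]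
  constructor
  · rintro ⟨hu, hv⟩
    exact Subtype.ext ((eq_of_mem_mem huv f hu hv).trans he.symm)
  · rintro rfl
    constructor <;> simp [he]

lemma neighborFinset_lineGraph {u v : Fin n} (huv : u ≠ v) (e : (K n).edgeSet)
    (he : (e : Sym2 (Fin n)) = s(u,v)) :
    (K n).lineGraph.neighborFinset e = (Ev n u ∪ Ev n v).erase e := by
  ext f
  simp only [mem_neighborFinset, lineGraph_adj_iff_exists, Finset.mem_erase, Finset.mem_union,
    Ev, Finset.mem_filter, Finset.mem_univ, true_and]
  constructor
  · rintro ⟨hne, w, hwe, hwf⟩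
    refine ⟨Ne.symm hne, ?_⟩
    rw [he] at hwe
    rcases Sym2.mem_iff.1 hwe with rfl | rfl
    · exact Or.inl hwf
    · exact Or.inr hwf
  · rintro ⟨hne, hu | hv⟩
    · exact ⟨Ne.symm hne, u, by simp [he], hu⟩
    · exact ⟨Ne.symm hne, v, by simp [he], hv⟩

lemma degree_lineGraph (hn : 3 ≤ n) (e : (K n).edgeSet) :
    (K n).lineGraph.degree e = 2 * n - 4 := by
  obtain ⟨u, v, huv, he⟩ := exists_rep e
  have hmem : e ∈ Ev n u ∪ Ev n v := by
    simp only [Finset.mem_union, Ev, Finset.mem_filter, Finset.mem_univ, true_and]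
    exact Or.inl (by simp [he])
  have hcard : (Ev n u ∪ Ev n v).card = 2 * n - 3 := by
    have h1 := Finset.card_union_add_card_inter (Ev n u) (Ev n v)
    rw [Ev_inter huv e he, card_Ev, card_Ev] at h1
    simp only [Finset.card_singleton] at h1
    omega
  rw [← card_neighborFinset_eq_degree, neighborFinset_lineGraph huv e he,
    Finset.card_erase_of_mem hmem, hcard]
  omega

lemma regular (hn : 3 ≤ n) : (K n).lineGraph.IsRegularOfDegree (2 * n - 4) :=
  fun e => degree_lineGraph hn e


noncomputable def dS (S : Finset (K n).edgeSet) (v : Fin n) : ℕ :=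
  (S.filter (fun f : (K n).edgeSet => v ∈ (f : Sym2 (Fin n)))).card

lemma dS_le (S : Finset (K n).edgeSet) (v : Fin n) : dS S v ≤ n - 1 := by
  rw [← card_Ev v]
  exact Finset.card_le_card (fun f hf => by
    simp only [Ev, Finset.mem_filter, Finset.mem_univ, true_and]
    exact (Finset.mem_filter.1 hf).2)

lemma dS_compl (S : Finset (K n).edgeSet) (v : Fin n) :
    dS Sᶜ v = (n - 1) - dS S v := by
  have hsub : S.filter (fun f : (K n).edgeSet => v ∈ (f : Sym2 (Fin n))) ⊆ Ev n v := fun f hf => by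
    simp only [Ev, Finset.mem_filter, Finset.mem_univ, true_and]
    exact (Finset.mem_filter.1 hf).2
  have : Sᶜ.filter (fun f : (K n).edgeSet => v ∈ (f : Sym2 (Fin n)))
      = Ev n v \ S.filter (fun f : (K n).edgeSet => v ∈ (f : Sym2 (Fin n))) := by
    ext f
    simp only [Finset.mem_filter, Finset.mem_compl, Finset.mem_sdiff, Ev, Finset.mem_univ,
      true_and]
    tauto
  rw [dS, this, Finset.card_sdiff_of_subset hsub, card_Ev]
  rfl

noncomputable def crossPairs (S : Finset (K n).edgeSet) :
    Finset ((K n).edgeSet × (K n).edgeSet) :=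
  (S ×ˢ Sᶜ).filter (fun p => (K n).lineGraph.Adj p.1 p.2)

lemma crossPairs_eq (S : Finset (K n).edgeSet) :
    crossPairs S = Finset.univ.biUnion (fun v =>
      (S.filter (fun f : (K n).edgeSet => v ∈ (f : Sym2 (Fin n)))) ×ˢ
      (Sᶜ.filter (fun f : (K n).edgeSet => v ∈ (f : Sym2 (Fin n))))) := by
  ext p
  simp only [crossPairs, Finset.mem_filter, Finset.mem_product, Finset.mem_biUnion,
    Finset.mem_univ, true_and, lineGraph_adj_iff_exists, Finset.mem_compl]
  constructor
  · rintro ⟨⟨h1, h2⟩, hne, w, hw1, hw2⟩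
    exact ⟨w, ⟨h1, hw1⟩, h2, hw2⟩
  · rintro ⟨w, ⟨h1, hw1⟩, h2, hw2⟩
    refine ⟨⟨h1, h2⟩, fun h => h2 (h ▸ h1), w, hw1, hw2⟩

lemma card_crossPairs (S : Finset (K n).edgeSet) :
    (crossPairs S).card = ∑ v : Fin n, dS S v * ((n - 1) - dS S v) := by
  rw [crossPairs_eq, Finset.card_biUnion]
  · refine Finset.sum_congr rfl fun v _ => ?_
    rw [Finset.card_product, ← dS, ← dS, dS_compl]
  · intro v _ w _ hvw
    rw [Function.onFun, Finset.disjoint_left]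
    rintro p hp hq
    simp only [Finset.mem_product, Finset.mem_filter, Finset.mem_compl] at hp hq
    have h1 : (p.1 : Sym2 (Fin n)) = s(v,w) :=
      eq_of_mem_mem hvw p.1 hp.1.2 hq.1.2
    have h2 : (p.2 : Sym2 (Fin n)) = s(v,w) :=
      eq_of_mem_mem hvw p.2 hp.2.2 hq.2.2
    exact hp.2.1 (Subtype.ext (h2.trans h1.symm) ▸ hp.1.1)

lemma nat_aux {a b : ℕ} (ha : 1 ≤ a) (hb : 1 ≤ b) : a + b - 1 ≤ a * b := by
  obtain ⟨a', rfl⟩ := Nat.exists_eq_add_of_le ha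
  obtain ⟨b', rfl⟩ := Nat.exists_eq_add_of_le hb
  have : (1 + a') * (1 + b') = a' * b' + a' + b' + 1 := by ring
  omega

lemma term_ge {d : ℕ} (hd1 : 1 ≤ d) (hd2 : d ≤ n - 2) (hn : 3 ≤ n) :
    n - 2 ≤ d * ((n - 1) - d) := by
  have h1 : 1 ≤ (n - 1) - d := by omega
  have := nat_aux hd1 h1
  omega


lemma mem_S_of_full {S : Finset (K n).edgeSet} {u : Fin n} (h : dS S u = n - 1)
    {f : (K n).edgeSet} (hf : u ∈ (f : Sym2 (Fin n))) : f ∈ S := by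
  have hsub : S.filter (fun f : (K n).edgeSet => u ∈ (f : Sym2 (Fin n))) ⊆ Ev n u :=
    fun g hg => Finset.mem_filter.2 ⟨Finset.mem_univ _, (Finset.mem_filter.1 hg).2⟩
  have heq := Finset.eq_of_subset_of_card_le hsub (by rw [card_Ev, ← h]; rfl)
  have : f ∈ Ev n u := Finset.mem_filter.2 ⟨Finset.mem_univ _, hf⟩
  rw [← heq] at this
  exact (Finset.mem_filter.1 this).1

lemma card_le_one_of_endpoints {P : Finset (Fin n)} (hP : P.card ≤ 2)
    {T : Finset (K n).edgeSet}
    (hT : ∀ f ∈ T, ∀ a : Fin n, a ∈ (f : Sym2 (Fin n)) → a ∈ P) : T.card ≤ 1 := by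
  rw [Finset.card_le_one]
  intro f hf g hg
  obtain ⟨a, b, hab, hfe⟩ := exists_rep f
  obtain ⟨c, d, hcd, hge⟩ := exists_rep g
  have h1 : ({a, b} : Finset (Fin n)) = P := by
    refine Finset.eq_of_subset_of_card_le ?_ (le_trans hP (by rw [Finset.card_pair hab]))
    intro x hx
    rcases Finset.mem_insert.1 hx with rfl | hx
    · exact hT f hf x (by simp [hfe])
    · rw [Finset.mem_singleton] at hx; subst hx
      exact hT f hf x (by simp [hfe])
  have h2 : ({c, d} : Finset (Fin n)) = P := by
    refine Finset.eq_of_subset_of_card_le ?_ (le_trans hP (by rw [Finset.card_pair hcd]))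
    intro x hx
    rcases Finset.mem_insert.1 hx with rfl | hx
    · exact hT g hg x (by simp [hge])
    · rw [Finset.mem_singleton] at hx; subst hx
      exact hT g hg x (by simp [hge])
  have h3 : ({a, b} : Finset (Fin n)) = {c, d} := h1.trans h2.symm
  have ha : a = c ∨ a = d := by
    have := h3 ▸ Finset.mem_insert_self a {b}
    simpa using this
  have hb : b = c ∨ b = d := by
    have : b ∈ ({c,d} : Finset (Fin n)) := h3 ▸ (by simp)
    simpa using this
  apply Subtype.ext
  rw [hfe, hge]
  rcases ha with rfl | rfl <;> rcases hb with rfl | rfl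
  · exact absurd rfl hab
  · rfl
  · exact Sym2.eq_swap
  · exact absurd rfl hab

lemma pcard_ge (hn : 3 ≤ n) (S : Finset (K n).edgeSet)
    (hS : 2 ≤ S.card) (hSc : 2 ≤ Sᶜ.card) :
    3 ≤ (Finset.univ.filter (fun v : Fin n => 1 ≤ dS S v ∧ dS S v ≤ n - 2)).card := by
  by_contra h
  push_neg at h
  have hP : (Finset.univ.filter (fun v : Fin n => 1 ≤ dS S v ∧ dS S v ≤ n - 2)).card ≤ 2 := by
    omega
  by_cases hzero : ∃ w : Fin n, dS S w = 0
  · by_cases hfull : ∃ u : Fin n, dS S u = n - 1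
    · obtain ⟨w, hw⟩ := hzero
      obtain ⟨u, hu⟩ := hfull
      have hne : u ≠ w := fun he => by rw [he, hw] at hu; omega
      have hg : s(u, w) ∈ (K n).edgeSet := by simp [hne]
      have hgS : (⟨s(u,w), hg⟩ : (K n).edgeSet) ∈ S := mem_S_of_full hu (by simp)
      have : (⟨s(u,w), hg⟩ : (K n).edgeSet) ∈
          S.filter (fun f : (K n).edgeSet => w ∈ (f : Sym2 (Fin n))) :=
        Finset.mem_filter.2 ⟨hgS, by simp⟩
      have h0 : S.filter (fun f : (K n).edgeSet => w ∈ (f : Sym2 (Fin n))) = ∅ :=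
        Finset.card_eq_zero.1 hw
      rw [h0] at this
      exact absurd this (Finset.notMem_empty _)
    · -- no full vertex: every edge of S has both endpoints partial
      push_neg at hfull
      have hT : ∀ f ∈ S, ∀ a : Fin n, a ∈ (f : Sym2 (Fin n)) →
          a ∈ Finset.univ.filter (fun v : Fin n => 1 ≤ dS S v ∧ dS S v ≤ n - 2) := by
        intro f hf a haf
        refine Finset.mem_filter.2 ⟨Finset.mem_univ _, ?_, ?_⟩
        · have : f ∈ S.filter (fun f : (K n).edgeSet => a ∈ (f : Sym2 (Fin n))) :=
            Finset.mem_filter.2 ⟨hf, haf⟩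
          have := Finset.card_pos.2 ⟨f, this⟩
          exact this
        · have := dS_le S a
          have := hfull a
          omega
      have := card_le_one_of_endpoints hP hT
      omega
  · -- no zero vertex: every edge of Sᶜ has both endpoints partial
    push_neg at hzero
    have hT : ∀ f ∈ Sᶜ, ∀ a : Fin n, a ∈ (f : Sym2 (Fin n)) →
        a ∈ Finset.univ.filter (fun v : Fin n => 1 ≤ dS S v ∧ dS S v ≤ n - 2) := by
      intro f hf a haf
      refine Finset.mem_filter.2 ⟨Finset.mem_univ _, ?_, ?_⟩
      · have := hzero a
        omega
      · have hle := dS_le S a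
        rcases eq_or_lt_of_le hle with heq | hlt
        · exact absurd (mem_S_of_full heq haf) (Finset.mem_compl.1 hf)
        · omega
    have := card_le_one_of_endpoints hP hT
    omega

lemma sum_ge (hn : 3 ≤ n) (S : Finset (K n).edgeSet)
    (hS : 2 ≤ S.card) (hSc : 2 ≤ Sᶜ.card) :
    2 * n - 3 ≤ ∑ v : Fin n, dS S v * ((n - 1) - dS S v) := by
  set P := Finset.univ.filter (fun v : Fin n => 1 ≤ dS S v ∧ dS S v ≤ n - 2) with hPdef
  have hP := pcard_ge hn S hS hSc
  calc 2 * n - 3 ≤ 3 * (n - 2) := by omega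
    _ ≤ P.card * (n - 2) := Nat.mul_le_mul_right _ hP
    _ = ∑ _v ∈ P, (n - 2) := by rw [Finset.sum_const, smul_eq_mul]
    _ ≤ ∑ v ∈ P, dS S v * ((n - 1) - dS S v) := by
        refine Finset.sum_le_sum fun v hv => ?_
        have hv' := Finset.mem_filter.1 hv
        exact term_ge hv'.2.1 hv'.2.2 hn
    _ ≤ ∑ v : Fin n, dS S v * ((n - 1) - dS S v) :=
        Finset.sum_le_sum_of_subset (Finset.subset_univ P)


lemma nonempty_W (hn : 3 ≤ n) : Nonempty (K n).edgeSet := by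
  refine ⟨⟨s((⟨0, by omega⟩ : Fin n), (⟨1, by omega⟩ : Fin n)), ?_⟩⟩
  simp only [mem_edgeSet, top_adj, ne_eq]
  intro h
  simpa using congrArg Fin.val h

lemma nontrivial_W (hn : 3 ≤ n) : Nontrivial (K n).edgeSet := by
  have h01 : ((⟨0, by omega⟩ : Fin n)) ≠ ⟨1, by omega⟩ := by
    intro h; simpa using congrArg Fin.val h
  have h02 : ((⟨0, by omega⟩ : Fin n)) ≠ ⟨2, by omega⟩ := by
    intro h; simpa using congrArg Fin.val h
  have h12 : ((⟨1, by omega⟩ : Fin n)) ≠ ⟨2, by omega⟩ := by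
    intro h; simpa using congrArg Fin.val h
  refine ⟨⟨s((⟨0, by omega⟩ : Fin n), ⟨1, by omega⟩), by simp [h01]⟩,
    ⟨s((⟨0, by omega⟩ : Fin n), ⟨2, by omega⟩), by simp [h02]⟩, ?_⟩
  intro h
  rw [Subtype.ext_iff] at h
  simp only [Sym2.eq_iff, Prod.mk.injEq, Prod.swap_prod_mk] at h
  rcases h with ⟨_, h⟩ | ⟨h, _⟩
  · exact h12 h
  · exact h02 h

lemma ncard_incidenceSet (hn : 3 ≤ n) (e : (K n).edgeSet) :
    ((K n).lineGraph.incidenceSet e).ncard = 2 * n - 4 := by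
  rw [Set.ncard_eq_toFinset_card', Set.toFinset_card, card_incidenceSet_eq_degree,
    degree_lineGraph hn]

lemma isEdgeCut_incidenceSet (hn : 3 ≤ n) (e : (K n).edgeSet) :
    IsEdgeCut (K n).lineGraph ((K n).lineGraph.incidenceSet e) := by
  refine ⟨(K n).lineGraph.incidenceSet_subset e, fun hc => ?_⟩
  haveI := nontrivial_W hn
  obtain ⟨f, hf⟩ := exists_ne e
  have hr : ((K n).lineGraph.deleteEdges ((K n).lineGraph.incidenceSet e)).Reachable e f :=
    hc.preconnected e f
  obtain ⟨w⟩ := hr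
  cases w with
  | nil => exact hf rfl
  | cons h p =>
    rw [deleteEdges_adj] at h
    exact h.2 ⟨h.1, Sym2.mem_mk_left _ _⟩


lemma cross_singleton (a : (K n).edgeSet) :
    (((crossPairs {a}).image (fun p => s(p.1, p.2))) : Set (Sym2 (K n).edgeSet))
      = (K n).lineGraph.incidenceSet a := by
  ext x
  simp only [Finset.coe_image, Set.mem_image, Finset.mem_coe, incidenceSet, Set.mem_setOf_eq]
  constructor
  · rintro ⟨⟨p1, p2⟩, hp, rfl⟩
    simp only [crossPairs, Finset.mem_filter, Finset.mem_product, Finset.mem_compl,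
      Finset.mem_singleton] at hp
    obtain ⟨⟨rfl, hp2⟩, hadj⟩ := hp
    exact ⟨(mem_edgeSet _).2 hadj, Sym2.mem_mk_left _ _⟩
  · rintro ⟨hxe, hax⟩
    have hspec := Sym2.other_spec hax
    have hadj : (K n).lineGraph.Adj a (Sym2.Mem.other hax) :=
      (mem_edgeSet _).1 (by rw [hspec]; exact hxe)
    refine ⟨(a, Sym2.Mem.other hax), ?_, hspec⟩
    exact Finset.mem_filter.2 ⟨Finset.mem_product.2 ⟨Finset.mem_singleton_self a,
      Finset.mem_compl.2 (fun hb => hadj.ne' (Finset.mem_singleton.1 hb))⟩, hadj⟩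

lemma cross_compl_singleton {S : Finset (K n).edgeSet} {a : (K n).edgeSet}
    (h : Sᶜ = {a}) :
    (((crossPairs S).image (fun p => s(p.1, p.2))) : Set (Sym2 (K n).edgeSet))
      = (K n).lineGraph.incidenceSet a := by
  ext x
  simp only [Finset.coe_image, Set.mem_image, Finset.mem_coe, incidenceSet, Set.mem_setOf_eq]
  constructor
  · rintro ⟨⟨p1, p2⟩, hp, rfl⟩
    simp only [crossPairs, Finset.mem_filter, Finset.mem_product, h,
      Finset.mem_singleton] at hp
    obtain ⟨⟨hp1, rfl⟩, hadj⟩ := hp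
    exact ⟨(mem_edgeSet _).2 hadj, Sym2.mem_mk_right _ _⟩
  · rintro ⟨hxe, hax⟩
    have hspec := Sym2.other_spec hax
    have hadj : (K n).lineGraph.Adj a (Sym2.Mem.other hax) :=
      (mem_edgeSet _).1 (by rw [hspec]; exact hxe)
    have hbS : Sym2.Mem.other hax ∈ S := by
      by_contra hb
      have : Sym2.Mem.other hax ∈ Sᶜ := Finset.mem_compl.2 hb
      rw [h, Finset.mem_singleton] at this
      exact hadj.ne' this
    refine ⟨(Sym2.Mem.other hax, a), ?_, by rw [Sym2.eq_swap]; exact hspec⟩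
    exact Finset.mem_filter.2 ⟨Finset.mem_product.2 ⟨hbS,
      by rw [h]; exact Finset.mem_singleton_self a⟩, hadj.symm⟩

/-- Main bound: any edge cut has at least 2n-4 edges, and an edge cut of size
at most 2n-4 is an incidence set. -/
lemma cut_bound (hn : 3 ≤ n) (X : Set (Sym2 (K n).edgeSet))
    (hX : IsEdgeCut (K n).lineGraph X) :
    2 * n - 4 ≤ X.ncard ∧
      (X.ncard ≤ 2 * n - 4 → ∃ v, X = (K n).lineGraph.incidenceSet v) := by
  haveI := nonempty_W hn
  have hXfin : X.Finite := Set.Finite.subset (Set.toFinite _) hX.1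
  -- get two non-reachable vertices
  have hnc : ¬ ((K n).lineGraph.deleteEdges X).Preconnected := by
    intro hpc
    exact hX.2 (SimpleGraph.Connected.mk hpc)
  rw [SimpleGraph.Preconnected] at hnc
  push_neg at hnc
  obtain ⟨e, f, hef⟩ := hnc
  set G' := (K n).lineGraph.deleteEdges X with hG'
  set S : Finset (K n).edgeSet := Finset.univ.filter (fun g => G'.Reachable e g) with hSdef
  have heS : e ∈ S := Finset.mem_filter.2 ⟨Finset.mem_univ _, Reachable.refl e⟩
  have hfS : f ∈ Sᶜ := Finset.mem_compl.2 (fun h => hef (Finset.mem_filter.1 h).2)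
  -- crossing edges are in X
  have hcross : ∀ p ∈ crossPairs S, s(p.1, p.2) ∈ X := by
    rintro ⟨a, b⟩ hp
    simp only [crossPairs, Finset.mem_filter, Finset.mem_product, Finset.mem_compl] at hp
    obtain ⟨⟨haS, hbS⟩, hadj⟩ := hp
    by_contra hx
    have : G'.Adj a b := deleteEdges_adj.2 ⟨hadj, hx⟩
    exact hbS (Finset.mem_filter.2 ⟨Finset.mem_univ _,
      ((Finset.mem_filter.1 haS).2).trans this.reachable⟩)
  -- injectivity of the Sym2 map on crossPairs
  have hinj : Set.InjOn (fun p : (K n).edgeSet × (K n).edgeSet => s(p.1, p.2))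
      (crossPairs S : Set _) := by
    rintro ⟨a, b⟩ hp ⟨c, d⟩ hq h
    simp only [crossPairs, Finset.coe_filter, Set.mem_setOf_eq, Finset.mem_product,
      Finset.mem_compl] at hp hq
    simp only [Sym2.eq_iff, Prod.mk.injEq, Prod.swap_prod_mk] at h
    rcases h with ⟨rfl, rfl⟩ | ⟨rfl, rfl⟩
    · rfl
    · exact absurd hp.1.1 hq.1.2
  have himg : ((crossPairs S).image (fun p => s(p.1, p.2))).card = (crossPairs S).card :=
    Finset.card_image_of_injOn hinj
  have hsub : ((crossPairs S).image (fun p => s(p.1, p.2)) : Set (Sym2 (K n).edgeSet)) ⊆ X := by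
    intro x hx
    simp only [Finset.coe_image, Set.mem_image, Finset.mem_coe] at hx
    obtain ⟨p, hp, rfl⟩ := hx
    exact hcross p hp
  have hcard_le : (crossPairs S).card ≤ X.ncard := by
    rw [← himg, ← Set.ncard_coe_finset]
    exact Set.ncard_le_ncard hsub hXfin
  have h1S : 1 ≤ S.card := Finset.card_pos.2 ⟨e, heS⟩
  have h1Sc : 1 ≤ Sᶜ.card := Finset.card_pos.2 ⟨f, hfS⟩
  by_cases hS1 : S.card = 1
  · obtain ⟨a, ha⟩ := Finset.card_eq_one.1 hS1
    rw [ha] at hsub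
    have hset : ((K n).lineGraph.incidenceSet a) ⊆ X := by
      rw [← cross_singleton a]; exact hsub
    have hge : 2 * n - 4 ≤ X.ncard := by
      rw [← ncard_incidenceSet hn a]
      exact Set.ncard_le_ncard hset hXfin
    refine ⟨hge, fun hle => ⟨a, ?_⟩⟩
    exact (Set.eq_of_subset_of_ncard_le hset (by rw [ncard_incidenceSet hn a]; omega) hXfin).symm
  · by_cases hSc1 : Sᶜ.card = 1
    · obtain ⟨a, ha⟩ := Finset.card_eq_one.1 hSc1
      have hset : ((K n).lineGraph.incidenceSet a) ⊆ X := by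
        rw [← cross_compl_singleton ha]; exact hsub
      have hge : 2 * n - 4 ≤ X.ncard := by
        rw [← ncard_incidenceSet hn a]
        exact Set.ncard_le_ncard hset hXfin
      refine ⟨hge, fun hle => ⟨a, ?_⟩⟩
      exact (Set.eq_of_subset_of_ncard_le hset
        (by rw [ncard_incidenceSet hn a]; omega) hXfin).symm
    · have hsum := sum_ge hn S (by omega) (by omega)
      rw [← card_crossPairs] at hsum
      have : 2 * n - 3 ≤ X.ncard := le_trans hsum hcard_le
      exact ⟨by omega, fun hle => absurd hle (by omega)⟩


lemma isMinCut_incidenceSet (hn : 3 ≤ n) (e : (K n).edgeSet) :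
    IsMinCut (K n).lineGraph ((K n).lineGraph.incidenceSet e) :=
  ⟨isEdgeCut_incidenceSet hn e, fun Y hY => by
    rw [ncard_incidenceSet hn e]; exact (cut_bound hn Y hY).1⟩

lemma mincut_classify (hn : 3 ≤ n) {X : Set (Sym2 (K n).edgeSet)}
    (hX : IsMinCut (K n).lineGraph X) : ∃ v, X = (K n).lineGraph.incidenceSet v := by
  obtain ⟨e⟩ := nonempty_W hn
  have hle : X.ncard ≤ 2 * n - 4 := by
    have := hX.2 _ (isEdgeCut_incidenceSet hn e)
    rwa [ncard_incidenceSet hn e] at this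
  exact (cut_bound hn X hX.1).2 hle

lemma edgeConn_eq (hn : 3 ≤ n) : edgeConn (K n).lineGraph = 2 * n - 4 := by
  obtain ⟨e⟩ := nonempty_W hn
  apply le_antisymm
  · exact Nat.sInf_le ⟨(K n).lineGraph.incidenceSet e, isEdgeCut_incidenceSet hn e,
      ncard_incidenceSet hn e⟩
  · refine le_csInf ⟨2 * n - 4, (K n).lineGraph.incidenceSet e, isEdgeCut_incidenceSet hn e,
      ncard_incidenceSet hn e⟩ ?_
    rintro m ⟨X, hX, rfl⟩
    exact (cut_bound hn X hX).1

lemma minDegree_eq (hn : 3 ≤ n) : (K n).lineGraph.minDegree = 2 * n - 4 := by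
  haveI := nonempty_W hn
  obtain ⟨e⟩ := nonempty_W hn
  apply le_antisymm
  · rw [← degree_lineGraph hn e]
    exact minDegree_le_degree _ e
  · exact le_minDegree_of_forall_le_degree _ _ (fun v => (degree_lineGraph hn v).ge)

lemma superLambda (hn : 3 ≤ n) : IsSuperLambda (K n).lineGraph := by
  refine ⟨by rw [edgeConn_eq hn, minDegree_eq hn], fun X hX => ?_⟩
  obtain ⟨v, rfl⟩ := mincut_classify hn hX
  exact ⟨v, by rw [degree_lineGraph hn, minDegree_eq hn], rfl⟩

noncomputable def toMincut (hn : 3 ≤ n) (e : (K n).edgeSet) :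
    {X : Set (Sym2 (K n).edgeSet) // IsMinCut (K n).lineGraph X} :=
  ⟨(K n).lineGraph.incidenceSet e, isMinCut_incidenceSet hn e⟩

lemma toMincut_injective (hn : 3 ≤ n) : Function.Injective (toMincut hn) := by
  intro e f h
  by_contra hef
  have hinc : (K n).lineGraph.incidenceSet e = (K n).lineGraph.incidenceSet f :=
    congrArg Subtype.val h
  have hdeg : 1 < (K n).lineGraph.degree e := by rw [degree_lineGraph hn]; omega
  rw [← card_neighborFinset_eq_degree, Finset.one_lt_card] at hdeg
  obtain ⟨g1, hg1, g2, hg2, hg12⟩ := hdeg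
  rw [mem_neighborFinset] at hg1 hg2
  have h1 : s(e, g1) ∈ (K n).lineGraph.incidenceSet f := by
    rw [← hinc]; exact ((K n).lineGraph.mk'_mem_incidenceSet_left_iff).2 hg1
  have h2 : s(e, g2) ∈ (K n).lineGraph.incidenceSet f := by
    rw [← hinc]; exact ((K n).lineGraph.mk'_mem_incidenceSet_left_iff).2 hg2
  have hf1 : f = e ∨ f = g1 := Sym2.mem_iff.1 h1.2
  have hf2 : f = e ∨ f = g2 := Sym2.mem_iff.1 h2.2
  rcases hf1 with rfl | rfl
  · exact hef rfl
  · rcases hf2 with h' | h'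
    · exact hef h'.symm
    · exact hg12 h'

lemma toMincut_surjective (hn : 3 ≤ n) : Function.Surjective (toMincut hn) := by
  rintro ⟨X, hX⟩
  obtain ⟨v, rfl⟩ := mincut_classify hn hX
  exact ⟨v, rfl⟩

lemma mincutGraph_adj (hn : 3 ≤ n) (e f : (K n).edgeSet) :
    (mincutGraph (K n).lineGraph).Adj (toMincut hn e) (toMincut hn f) ↔
      (K n).lineGraph.Adj e f := by
  rw [mincutGraph, fromRel_adj]
  constructor
  · rintro ⟨hne, hr⟩
    have hne' : e ≠ f := fun h => hne (congrArg (toMincut hn) h)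
    have hx : ((K n).lineGraph.incidenceSet e ∩ (K n).lineGraph.incidenceSet f).Nonempty := by
      rcases hr with h | h
      · exact h
      · rwa [Set.inter_comm] at h
    obtain ⟨x, hx1, hx2⟩ := hx
    exact adj_of_mem_incidenceSet _ hne' hx1 hx2
  · intro hadj
    refine ⟨fun h => hadj.ne (toMincut_injective hn h), Or.inl ?_⟩
    show ((K n).lineGraph.incidenceSet e ∩ (K n).lineGraph.incidenceSet f).Nonempty
    rw [incidenceSet_inter_incidenceSet_of_adj _ hadj]
    exact ⟨s(e,f), rfl⟩

noncomputable def theIso (hn : 3 ≤ n) :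
    mincutGraph (K n).lineGraph ≃g (K n).lineGraph where
  toEquiv := (Equiv.ofBijective (toMincut hn)
    ⟨toMincut_injective hn, toMincut_surjective hn⟩).symm
  map_rel_iff' := by
    intro A B
    set φ := Equiv.ofBijective (toMincut hn) ⟨toMincut_injective hn, toMincut_surjective hn⟩
    have : A = φ (φ.symm A) := (φ.apply_symm_apply A).symm
    rw [show A = φ (φ.symm A) from (φ.apply_symm_apply A).symm,
      show B = φ (φ.symm B) from (φ.apply_symm_apply B).symm]
    simp only [Equiv.symm_apply_apply]
    exact (mincutGraph_adj hn (φ.symm A) (φ.symm B)).symm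


end LKn

open scoped Classical in
theorem lineGraph_complete_superLambda (n : ℕ) (hn : 3 ≤ n) :
    (⊤ : SimpleGraph (Fin n)).lineGraph.IsRegularOfDegree (2 * n - 4) ∧
      IsSuperLambda (⊤ : SimpleGraph (Fin n)).lineGraph ∧
      Nonempty (mincutGraph (⊤ : SimpleGraph (Fin n)).lineGraph
        ≃g (⊤ : SimpleGraph (Fin n)).lineGraph) :=
  ⟨fun e => LKn.degree_lineGraph hn e, LKn.superLambda hn, ⟨LKn.theIso hn⟩⟩
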